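/- arXiv:2003.09368 — 3 statements merged into one kernel-verified Lean document; each statement's English description precedes it below -/
import Mathlib

section
/- Fix integers a, b ≥ 1 and set k = a/b. Then the infinite product ∏_p (1 - 1/p)^{k²} ∑_{m≥0} τ_{-k}(p^m)² p^{-m}, taken over all primes p, converges absolutely to a strictly positive real number. -/
open Filter

/-- `τ_α(n)` (real version): the Dirichlet series coefficients of `ζ(s)^α`, given on
prime powers by `τ_α(p^m) = (∏_{j=0}^{m-1} (α+j))/m!`. -/
noncomputable def tauCoeffR (α : ℝ) (n : ℕ) : ℝ :=
  if n = 0 then 0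
  else n.factorization.prod fun _p e => (∏ j ∈ Finset.range e, (α + j)) / (Nat.factorial e)

noncomputable def cc (α : ℝ) (m : ℕ) : ℝ :=
  (∏ j ∈ Finset.range m, (α + j)) / (Nat.factorial m)

lemma cc_zero (α : ℝ) : cc α 0 = 1 := by simp [cc]

lemma cc_one (α : ℝ) : cc α 1 = α := by simp [cc]

lemma cc_succ (α : ℝ) (m : ℕ) : cc α (m + 1) = cc α m * ((α + m) / (m + 1)) := by
  rw [cc, cc, Finset.prod_range_succ, Nat.factorial_succ, div_mul_div_comm]
  push_cast
  rw [mul_comm ((m:ℝ)+1)]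

lemma cc_pos {k : ℝ} (hk : 0 < k) (m : ℕ) : 0 < cc k m := by
  apply div_pos
  · exact Finset.prod_pos fun j _ => by positivity
  · exact_mod_cast m.factorial_pos

lemma abs_cc_neg_le {k : ℝ} (hk : 0 < k) (m : ℕ) : |cc (-k) m| ≤ cc k m := by
  rw [cc, cc, abs_div, Finset.abs_prod, abs_of_pos (a := ((Nat.factorial m : ℝ)))
    (by exact_mod_cast m.factorial_pos)]
  have hprod : ∏ j ∈ Finset.range m, |(-k + (j:ℝ))| ≤ ∏ j ∈ Finset.range m, (k + (j:ℝ)) := by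
    apply Finset.prod_le_prod (fun j _ => abs_nonneg _)
    intro j _
    have h0 : (0:ℝ) ≤ (j:ℝ) := j.cast_nonneg
    rw [abs_le]
    constructor <;> linarith
  gcongr

lemma cc_le_pow {k A : ℝ} (hk : 0 < k) (hA : 1 ≤ A) (hkA : k ≤ A) (m : ℕ) :
    cc k m ≤ A ^ m := by
  have hfact : ((Nat.factorial m : ℝ)) = ∏ j ∈ Finset.range m, ((j : ℝ) + 1) := by
    induction m with
    | zero => simp
    | succ n ih => rw [Nat.factorial_succ, Finset.prod_range_succ, ← ih]; push_cast; ring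
  rw [cc, hfact, ← Finset.prod_div_distrib]
  calc ∏ j ∈ Finset.range m, (k + j) / (j + 1) ≤ ∏ j ∈ Finset.range m, A := by
        apply Finset.prod_le_prod
        · intro j hj; positivity
        · intro j hj
          rw [div_le_iff₀ (by positivity)]
          have : (0:ℝ) ≤ (j:ℝ) := j.cast_nonneg
          nlinarith
    _ = A ^ m := by rw [Finset.prod_const, Finset.card_range]

lemma summable_cc {k x : ℝ} (hk : 0 < k) (hx : 0 < x) (hx1 : x < 1) :
    Summable fun m => cc (-k) m ^ 2 * x ^ m := by
  have hvpos : ∀ m, 0 < cc k m ^ 2 * x ^ m :=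
    fun m => mul_pos (pow_pos (cc_pos hk m) 2) (pow_pos hx m)
  have hvs : Summable fun m => cc k m ^ 2 * x ^ m := by
    apply summable_of_ratio_test_tendsto_lt_one hx1
      (Filter.Eventually.of_forall fun m => (hvpos m).ne')
    have heq : (fun m : ℕ => ‖cc k (m+1) ^ 2 * x ^ (m+1)‖ / ‖cc k m ^ 2 * x ^ m‖)
        = fun m : ℕ => ((k + m)/(m+1))^2 * x := by
      funext m
      rw [Real.norm_eq_abs, Real.norm_eq_abs, abs_of_pos (hvpos (m+1)), abs_of_pos (hvpos m),
        cc_succ]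
      have h1 : cc k m ≠ 0 := (cc_pos hk m).ne'
      have h2 : x ^ m ≠ 0 := (pow_pos hx m).ne'
      field_simp
      ring
    rw [heq]
    have h1 : Tendsto (fun m : ℕ => (k + m)/(m+1)) atTop (nhds 1) := by
      have he : (fun m : ℕ => (k + m)/(m+1)) = fun m : ℕ => (k-1) * (1/(m+1)) + 1 := by
        funext m
        have : ((m:ℝ) + 1) ≠ 0 := by positivity
        field_simp
        ring
      rw [he]
      have := (tendsto_one_div_add_atTop_nhds_zero_nat.const_mul (k-1)).add_const 1
      simpa using this
    have := (h1.pow 2).mul_const x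
    simpa using this
  apply Summable.of_nonneg_of_le (fun m => by positivity) (fun m => ?_) hvs
  have h2 : cc (-k) m ^ 2 ≤ cc k m ^ 2 := by
    rw [← sq_abs]
    exact pow_le_pow_left₀ (abs_nonneg _) (abs_cc_neg_le hk m) 2
  exact mul_le_mul_of_nonneg_right h2 (pow_nonneg hx.le m)

lemma abs_cc_le_pow {k A : ℝ} (hk : 0 < k) (hA : 1 ≤ A) (hkA : k ≤ A) (m : ℕ) :
    |cc (-k) m| ≤ A ^ m := (abs_cc_neg_le hk m).trans (cc_le_pow hk hA hkA m)

set_option maxHeartbeats 1000000 in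
lemma tail_bound {k A x : ℝ} (hk : 0 < k) (hA : 1 ≤ A) (hkA : k ≤ A) (hx : 0 < x)
    (hr1 : A ^ 2 * x ≤ 1/4) :
    ∑' n : ℕ, cc (-k) (n + 1 + 1) ^ 2 * x ^ (n + 1 + 1) ≤ 2 * A ^ 4 * x ^ 2 := by
  set r : ℝ := A ^ 2 * x with hrdef
  have hr0 : 0 ≤ r := by positivity
  have hrlt : r < 1 := by linarith
  have hgs : Summable (fun n : ℕ => r ^ n * r ^ 2) :=
    (summable_geometric_of_lt_one hr0 hrlt).mul_right _
  have hx1 : x < 1 := by nlinarith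
  have hsum : Summable fun m => cc (-k) m ^ 2 * x ^ m := summable_cc hk hx hx1
  have hsum2 : Summable fun n : ℕ => cc (-k) (n + 1 + 1) ^ 2 * x ^ (n + 1 + 1) :=
    (summable_nat_add_iff 2).mpr hsum
  have hle : ∀ n : ℕ, cc (-k) (n + 1 + 1) ^ 2 * x ^ (n + 1 + 1) ≤ r ^ n * r ^ 2 := by
    intro n
    have h1 : |cc (-k) (n + 1 + 1)| ≤ A ^ (n + 1 + 1) := abs_cc_le_pow hk hA hkA _
    have h2 : cc (-k) (n + 1 + 1) ^ 2 ≤ (A ^ (n + 1 + 1)) ^ 2 := by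
      rw [← sq_abs]
      exact pow_le_pow_left₀ (abs_nonneg _) h1 2
    calc cc (-k) (n + 1 + 1) ^ 2 * x ^ (n + 1 + 1)
        ≤ (A ^ (n + 1 + 1)) ^ 2 * x ^ (n + 1 + 1) :=
          mul_le_mul_of_nonneg_right h2 (pow_nonneg hx.le _)
      _ = r ^ n * r ^ 2 := by
          rw [hrdef]
          ring
  calc ∑' n : ℕ, cc (-k) (n + 1 + 1) ^ 2 * x ^ (n + 1 + 1)
      ≤ ∑' n : ℕ, r ^ n * r ^ 2 := Summable.tsum_le_tsum hle hsum2 hgs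
    _ = (1 - r)⁻¹ * r ^ 2 := by rw [tsum_mul_right, tsum_geometric_of_lt_one hr0 hrlt]
    _ ≤ 2 * r ^ 2 := by
        have h3 : (1 - r)⁻¹ ≤ 2 := by
          rw [inv_le_comm₀ (by linarith) (by norm_num)]
          linarith
        exact mul_le_mul_of_nonneg_right h3 (by positivity)
    _ = 2 * A ^ 4 * x ^ 2 := by rw [hrdef]; ring

set_option maxHeartbeats 1000000 in
lemma log_bound {k A x : ℝ} (hk : 0 < k) (hA : 1 ≤ A) (hkA : k ≤ A) (hx : 0 < x)
    (hxs : x ≤ 1 / (4 * (A + 1) ^ 4)) :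
    |Real.log ((1 - x) ^ (k ^ 2) * ∑' m : ℕ, cc (-k) m ^ 2 * x ^ m)|
      ≤ 8 * (A + 1) ^ 4 * x ^ 2 := by
  have hA1 : (1:ℝ) ≤ (A + 1) ^ 4 := one_le_pow₀ (by linarith)
  have h4 : x * (4 * (A + 1) ^ 4) ≤ 1 := by
    rw [le_div_iff₀ (by positivity)] at hxs; exact hxs
  have hAA : A ^ 2 ≤ (A + 1) ^ 4 := by nlinarith
  have hx4 : x ≤ 1 / 4 := by nlinarith
  have hx1 : x < 1 := by linarith
  have hrp : (0:ℝ) < 1 - x := by linarith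
  have hsum := summable_cc hk hx hx1
  have hr1 : A ^ 2 * x ≤ 1 / 4 := by
    nlinarith [mul_le_mul_of_nonneg_right hAA hx.le]
  set T := ∑' n : ℕ, cc (-k) (n + 1 + 1) ^ 2 * x ^ (n + 1 + 1) with hTdef
  have hT2 : T ≤ 2 * A ^ 4 * x ^ 2 := tail_bound hk hA hkA hx hr1
  have hT0 : 0 ≤ T := tsum_nonneg fun n => by positivity
  have hS : (∑' m : ℕ, cc (-k) m ^ 2 * x ^ m) = 1 + (k ^ 2 * x + T) := by
    rw [Summable.tsum_eq_zero_add hsum, Summable.tsum_eq_zero_add ((summable_nat_add_iff 1).mpr hsum), ← hTdef]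
    norm_num [cc_zero, cc_one]
  set u : ℝ := k ^ 2 * x + T with hudef
  have hu0 : 0 ≤ u := by positivity
  have hk2A : k ^ 2 ≤ A ^ 2 := pow_le_pow_left₀ hk.le hkA 2
  have hA4 : A ^ 4 ≤ (A + 1) ^ 4 := by nlinarith
  have hTx : T ≤ x / 2 := by
    nlinarith [mul_le_mul_of_nonneg_right hA4 (mul_nonneg hx.le hx.le)]
  have huA : u ≤ (A ^ 2 + 1) * x := by
    nlinarith [mul_le_mul_of_nonneg_right hk2A hx.le]
  have huhalf : u ≤ 1 / 2 := by nlinarith [mul_le_mul_of_nonneg_right hk2A hx.le]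
  have hSpos : (0:ℝ) < 1 + u := by linarith
  rw [hS, Real.log_mul (Real.rpow_pos_of_pos hrp _).ne' hSpos.ne', Real.log_rpow hrp]
  have hE1 : |Real.log (1 - x) + x| ≤ 2 * x ^ 2 := by
    have h := Real.abs_log_sub_add_sum_range_le (x := x) (by rw [abs_of_pos hx]; linarith) 1
    rw [abs_of_pos hx] at h
    simp only [Finset.sum_range_one, pow_one, Nat.cast_zero, zero_add, div_one] at h
    rw [add_comm]
    calc |x + Real.log (1 - x)| ≤ x ^ 2 / (1 - x) := h
      _ ≤ 2 * x ^ 2 := by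
          rw [div_le_iff₀ hrp]; nlinarith [sq_nonneg x]
  have hE2 : |Real.log (1 + u) - u| ≤ 2 * u ^ 2 := by
    have h := Real.abs_log_sub_add_sum_range_le (x := -u)
      (by rw [abs_neg, abs_of_nonneg hu0]; linarith) 1
    rw [abs_neg, abs_of_nonneg hu0, sub_neg_eq_add] at h
    simp only [Finset.sum_range_one, pow_one, Nat.cast_zero, zero_add, div_one] at h
    rw [← neg_add_eq_sub]
    calc |-u + Real.log (1 + u)| ≤ u ^ 2 / (1 - u) := h
      _ ≤ 2 * u ^ 2 := by
          rw [div_le_iff₀ (by linarith)]; nlinarith [sq_nonneg u]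
  have key : k ^ 2 * Real.log (1 - x) + Real.log (1 + u)
      = k ^ 2 * (Real.log (1 - x) + x) + (Real.log (1 + u) - u) + T := by
    rw [hudef]; ring
  rw [key]
  have habs : |k ^ 2 * (Real.log (1 - x) + x) + (Real.log (1 + u) - u) + T|
      ≤ k ^ 2 * |Real.log (1 - x) + x| + |Real.log (1 + u) - u| + T := by
    calc |k ^ 2 * (Real.log (1 - x) + x) + (Real.log (1 + u) - u) + T|
        ≤ |k ^ 2 * (Real.log (1 - x) + x) + (Real.log (1 + u) - u)| + |T| := abs_add_le _ _
      _ ≤ |k ^ 2 * (Real.log (1 - x) + x)| + |Real.log (1 + u) - u| + |T| :=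
          add_le_add_left (abs_add_le _ _) _
      _ = k ^ 2 * |Real.log (1 - x) + x| + |Real.log (1 + u) - u| + T := by
          rw [abs_mul, abs_of_nonneg (sq_nonneg k), abs_of_nonneg hT0]
  have hu2 : u ^ 2 ≤ (A ^ 2 + 1) ^ 2 * x ^ 2 := by
    have h := pow_le_pow_left₀ hu0 huA 2
    rwa [mul_pow] at h
  have hE1' : k ^ 2 * |Real.log (1 - x) + x| ≤ A ^ 2 * (2 * x ^ 2) := by
    calc k ^ 2 * |Real.log (1 - x) + x| ≤ k ^ 2 * (2 * x ^ 2) :=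
          mul_le_mul_of_nonneg_left hE1 (sq_nonneg k)
      _ ≤ A ^ 2 * (2 * x ^ 2) := mul_le_mul_of_nonneg_right hk2A (by positivity)
  have hpoly : 2 * A ^ 2 + 2 * (A ^ 2 + 1) ^ 2 + 2 * A ^ 4 ≤ 8 * (A + 1) ^ 4 := by nlinarith
  have hfin := mul_le_mul_of_nonneg_right hpoly (sq_nonneg x)
  calc |k ^ 2 * (Real.log (1 - x) + x) + (Real.log (1 + u) - u) + T|
      ≤ k ^ 2 * |Real.log (1 - x) + x| + |Real.log (1 + u) - u| + T := habs
    _ ≤ A ^ 2 * (2 * x ^ 2) + 2 * u ^ 2 + 2 * A ^ 4 * x ^ 2 := by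
        exact add_le_add (add_le_add hE1' hE2) hT2
    _ ≤ 8 * (A + 1) ^ 4 * x ^ 2 := by nlinarith

lemma tauCoeffR_prime_pow {p : ℕ} (hp : p.Prime) (α : ℝ) (m : ℕ) :
    tauCoeffR α (p ^ m) = cc α m := by
  have h0 : p ^ m ≠ 0 := pow_ne_zero m hp.pos.ne'
  rw [tauCoeffR, if_neg h0, hp.factorization_pow]
  rw [Finsupp.prod_single_index]
  · rfl
  · simp

set_option maxHeartbeats 1000000 in
/-- The Euler product `∏_p (1 - 1/p)^{k²} ∑_{m ≥ 0} τ_{-k}(p^m)² p^{-m}`, `k = a/b`,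
converges absolutely to a strictly positive real number. -/
theorem euler_product_positive (a b : ℕ) (ha : 0 < a) (hb : 0 < b) :
    (∀ p : Nat.Primes, Summable fun m : ℕ =>
        tauCoeffR (-((a : ℝ) / b)) ((p : ℕ) ^ m) ^ 2 / ((p : ℕ) : ℝ) ^ m) ∧
    Multipliable (fun p : Nat.Primes =>
      (1 - 1 / ((p : ℕ) : ℝ)) ^ (((a : ℝ) / b) ^ 2) *
        ∑' m : ℕ, tauCoeffR (-((a : ℝ) / b)) ((p : ℕ) ^ m) ^ 2 / ((p : ℕ) : ℝ) ^ m) ∧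
    0 < ∏' p : Nat.Primes,
      (1 - 1 / ((p : ℕ) : ℝ)) ^ (((a : ℝ) / b) ^ 2) *
        ∑' m : ℕ, tauCoeffR (-((a : ℝ) / b)) ((p : ℕ) ^ m) ^ 2 / ((p : ℕ) : ℝ) ^ m := by
  set k : ℝ := (a : ℝ) / b with hkdef
  have hk : 0 < k := div_pos (by exact_mod_cast ha) (by exact_mod_cast hb)
  have hA : (1:ℝ) ≤ (a : ℝ) := by exact_mod_cast ha
  have hkA : k ≤ (a : ℝ) := by
    rw [hkdef]
    exact div_le_self (by positivity) (by exact_mod_cast hb)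
  have hp1 : ∀ p : Nat.Primes, (1:ℝ) < ((p : ℕ) : ℝ) := fun p => by
    exact_mod_cast p.prop.one_lt
  have hx : ∀ p : Nat.Primes, (0:ℝ) < 1 / ((p : ℕ) : ℝ) := fun p => by
    have := hp1 p; positivity
  have hx1 : ∀ p : Nat.Primes, 1 / ((p : ℕ) : ℝ) < 1 := fun p =>
    (div_lt_one (by linarith [hp1 p])).mpr (hp1 p)
  have heq : ∀ p : Nat.Primes,
      (fun m : ℕ => tauCoeffR (-k) ((p : ℕ) ^ m) ^ 2 / ((p : ℕ) : ℝ) ^ m)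
        = fun m : ℕ => cc (-k) m ^ 2 * (1 / ((p : ℕ) : ℝ)) ^ m := by
    intro p
    funext m
    rw [tauCoeffR_prime_pow p.prop, div_eq_mul_inv, one_div, inv_pow]
  have h1 : ∀ p : Nat.Primes, Summable fun m : ℕ =>
      tauCoeffR (-k) ((p : ℕ) ^ m) ^ 2 / ((p : ℕ) : ℝ) ^ m := by
    intro p
    rw [heq p]
    exact summable_cc hk (hx p) (hx1 p)
  set G : Nat.Primes → ℝ := fun p =>
    (1 - 1 / ((p : ℕ) : ℝ)) ^ (k ^ 2) *
      ∑' m : ℕ, tauCoeffR (-k) ((p : ℕ) ^ m) ^ 2 / ((p : ℕ) : ℝ) ^ m with hGdef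
  have hGeq : ∀ p : Nat.Primes, G p = (1 - 1 / ((p : ℕ) : ℝ)) ^ (k ^ 2) *
      ∑' m : ℕ, cc (-k) m ^ 2 * (1 / ((p : ℕ) : ℝ)) ^ m := by
    intro p
    rw [hGdef]
    simp only
    rw [heq p]
  have hGpos : ∀ p : Nat.Primes, 0 < G p := by
    intro p
    rw [hGeq p]
    apply mul_pos (Real.rpow_pos_of_pos (by linarith [hx1 p]) _)
    have hone : (1:ℝ) ≤ ∑' m : ℕ, cc (-k) m ^ 2 * (1 / ((p : ℕ) : ℝ)) ^ m := by
      have h := Summable.le_tsum (summable_cc hk (hx p) (hx1 p)) 0 (fun j _ => by positivity)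
      simpa [cc_zero] using h
    linarith
  have hlog : Summable fun p : Nat.Primes => Real.log (G p) := by
    apply Summable.of_norm_bounded_eventually
      (g := fun p : Nat.Primes => 8 * ((a : ℝ) + 1) ^ 4 * (1 / ((p : ℕ) : ℝ) ^ 2))
    · have hs : Summable (fun n : ℕ => 1 / (n : ℝ) ^ 2) :=
        Real.summable_one_div_nat_pow.mpr one_lt_two
      exact (hs.comp_injective Nat.Primes.coe_nat_injective).mul_left _
    · rw [eventually_cofinite]
      apply Set.Finite.subset
        ((Set.finite_Iio (4 * (a + 1) ^ 4 : ℕ)).preimage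
          (Set.injOn_of_injective Nat.Primes.coe_nat_injective))
      intro p hp
      simp only [Set.mem_setOf_eq, not_le] at hp
      simp only [Set.mem_preimage, Set.mem_Iio]
      by_contra hge
      push_neg at hge
      have hNpos : (0:ℝ) < 4 * ((a : ℝ) + 1) ^ 4 := by positivity
      have hge' : 4 * ((a : ℝ) + 1) ^ 4 ≤ ((p : ℕ) : ℝ) := by
        calc 4 * ((a : ℝ) + 1) ^ 4 = ((4 * (a + 1) ^ 4 : ℕ) : ℝ) := by push_cast; ring
          _ ≤ ((p : ℕ) : ℝ) := by exact_mod_cast hge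
      have hxs : 1 / ((p : ℕ) : ℝ) ≤ 1 / (4 * ((a : ℝ) + 1) ^ 4) :=
        one_div_le_one_div_of_le hNpos hge'
      have hb := log_bound hk hA hkA (hx p) hxs
      apply absurd hp
      change ¬ (8 * ((a : ℝ) + 1) ^ 4 * (1 / ((p : ℕ) : ℝ) ^ 2) < ‖Real.log (G p)‖)
      push_neg
      calc ‖Real.log (G p)‖ = |Real.log ((1 - 1 / ((p : ℕ) : ℝ)) ^ (k ^ 2) *
            ∑' m : ℕ, cc (-k) m ^ 2 * (1 / ((p : ℕ) : ℝ)) ^ m)| := by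
            rw [Real.norm_eq_abs, hGeq p]
        _ ≤ 8 * ((a : ℝ) + 1) ^ 4 * (1 / ((p : ℕ) : ℝ)) ^ 2 := hb
        _ = 8 * ((a : ℝ) + 1) ^ 4 * (1 / ((p : ℕ) : ℝ) ^ 2) := by
            rw [div_pow, one_pow]
  refine ⟨h1, ?_, ?_⟩
  · exact Real.multipliable_of_summable_log hGpos hlog
  · have hprod := Real.rexp_tsum_eq_tprod hGpos hlog
    exact lt_of_lt_of_eq (Real.exp_pos _) hprod
end

section
/- Let k be a positive integer and let z₁, z₂, z₃, s be complex numbers with Re(z₂+2s) > 0, Re(z₁+z₂+2s) > 0 and Re(z₂+z₃+2s) > 0. Then ∑_{ℓ ≥ 1} f_{z₁,z₃}(kℓ) ℓ^{-(1+z₂+2s)} = ( ζ(1+z₁+z₂+2s) ζ(1+z₂+z₃+2s) / ζ(1+z₂+2s) ) × ∏_{p^{k_p} ∥ k} ( ∑_{m≥0} f_{z₁,z₃}(p^{m+k_p}) p^{-m(1+z₂+2s)} ) / ( ∑_{m≥0} f_{z₁,z₃}(p^{m}) p^{-m(1+z₂+2s)} ), where p^{k_p} ∥ k means p^{k_p}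 exactly divides k. -/
open Complex

/-- `f_{α,γ}(n) = ∑_{n₁n₂n₃ = n} μ(n₁) n₂^{-α} n₃^{-γ}`. -/
noncomputable def fShift (α γ : ℂ) (n : ℕ) : ℂ :=
  ∑ p ∈ n.divisorsAntidiagonal, (ArithmeticFunction.moebius p.1 : ℂ) *
    ∑ q ∈ p.2.divisorsAntidiagonal, (q.1 : ℂ) ^ (-α) * (q.2 : ℂ) ^ (-γ)

set_option maxHeartbeats 1000000

open ArithmeticFunction LSeries
open scoped LSeries.notation

section aux

lemma castPowCpow (p j : ℕ) (α : ℂ) : ((p ^ j : ℕ) : ℂ) ^ α = ((p : ℂ) ^ α) ^ j := by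
  push_cast
  rw [← Complex.natCast_cpow_natCast_mul, Complex.cpow_nat_mul]

lemma castMulCpow (m n : ℕ) (α : ℂ) : ((m * n : ℕ) : ℂ) ^ α = (m : ℂ) ^ α * (n : ℂ) ^ α := by
  push_cast
  exact Complex.natCast_mul_natCast_cpow m n α

noncomputable def powAF (α : ℂ) : ArithmeticFunction ℂ :=
  ⟨fun n => if n = 0 then 0 else (n : ℂ) ^ (-α), by simp⟩

lemma powAF_apply {α : ℂ} {n : ℕ} (hn : n ≠ 0) : powAF α n = (n : ℂ) ^ (-α) := if_neg hn

lemma powAF_mul_apply (α : ℂ) (m n : ℕ) : powAF α (m * n) = powAF α m * powAF α n := by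
  rcases eq_or_ne m 0 with rfl | hm
  · simp [powAF]
  rcases eq_or_ne n 0 with rfl | hn
  · simp [powAF]
  rw [powAF_apply (Nat.mul_ne_zero hm hn), powAF_apply hm, powAF_apply hn, castMulCpow]

lemma powAF_mult (α : ℂ) : (powAF α).IsMultiplicative :=
  ⟨by rw [powAF_apply one_ne_zero]; simp, fun _ => powAF_mul_apply α _ _⟩

noncomputable def FAF (z₁ z₃ : ℂ) : ArithmeticFunction ℂ :=
  ((moebius : ArithmeticFunction ℤ) : ArithmeticFunction ℂ) * (powAF z₁ * powAF z₃)

lemma FAF_mult (z₁ z₃ : ℂ) : (FAF z₁ z₃).IsMultiplicative :=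
  (isMultiplicative_moebius.intCast).mul ((powAF_mult z₁).mul (powAF_mult z₃))

lemma FAF_eq_fShift (z₁ z₃ : ℂ) (n : ℕ) : FAF z₁ z₃ n = fShift z₁ z₃ n := by
  rcases eq_or_ne n 0 with rfl | hn
  · simp [fShift]
  rw [FAF, mul_apply, fShift]
  refine Finset.sum_congr rfl fun p hp => ?_
  have hp2 : p.2 ≠ 0 := (Nat.ne_zero_of_mem_divisorsAntidiagonal hp).2
  rw [intCoe_apply, mul_apply]
  congr 1
  refine Finset.sum_congr rfl fun q hq => ?_
  have h1 : q.1 ≠ 0 := (Nat.ne_zero_of_mem_divisorsAntidiagonal hq).1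
  have h2 : q.2 ≠ 0 := (Nat.ne_zero_of_mem_divisorsAntidiagonal hq).2
  rw [powAF_apply h1, powAF_apply h2]

/- ### L-series facts -/

lemma term_powAF (α w : ℂ) (n : ℕ) :
    term (↗(powAF α)) w n = term (↗(zeta : ArithmeticFunction ℕ)) (w + α) n := by
  rcases eq_or_ne n 0 with rfl | hn
  · simp [term]
  have hn' : (n : ℂ) ≠ 0 := Nat.cast_ne_zero.mpr hn
  rw [term_of_ne_zero hn, term_of_ne_zero hn, powAF_apply hn]
  simp only [zeta_apply_ne hn, Nat.cast_one]
  rw [cpow_add _ _ hn', cpow_neg]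
  have h1 : (n:ℂ) ^ w ≠ 0 := fun h => hn' ((Complex.cpow_eq_zero_iff _ _).mp h).1
  field_simp

lemma powAF_LSummable {α w : ℂ} (h : 1 < (w + α).re) : LSeriesSummable (↗(powAF α)) w :=
  Summable.congr ((LSeriesSummable_zeta_iff (s := w + α)).mpr h)
    (fun n => (term_powAF α w n).symm)

lemma powAF_LSeries {α w : ℂ} (h : 1 < (w + α).re) :
    LSeries (↗(powAF α)) w = riemannZeta (w + α) := by
  rw [LSeries, tsum_congr (term_powAF α w)]
  exact LSeries_zeta_eq_riemannZeta h

lemma moebius_coe (n : ℕ) :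
    (↗((moebius : ArithmeticFunction ℤ) : ArithmeticFunction ℂ)) n = (↗moebius) n := by
  simp [intCoe_apply]

lemma moebius_LSummable {w : ℂ} (h : 1 < w.re) :
    LSeriesSummable (↗((moebius : ArithmeticFunction ℤ) : ArithmeticFunction ℂ)) w :=
  (LSeriesSummable_congr w fun {n} _ => (moebius_coe n)).mpr
    (LSeriesSummable_moebius_iff.mpr h)

lemma moebius_LSeries {w : ℂ} (h : 1 < w.re) :
    LSeries (↗((moebius : ArithmeticFunction ℤ) : ArithmeticFunction ℂ)) w
      = (riemannZeta w)⁻¹ := by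
  rw [LSeries_congr (fun {n} _ => (moebius_coe n)) w]
  have h2 := LSeries_zeta_mul_Lseries_moebius h
  rw [LSeries_zeta_eq_riemannZeta h] at h2
  field_simp [riemannZeta_ne_zero_of_one_lt_re h] at h2 ⊢
  linear_combination h2

lemma FAF_LSummable {z₁ z₃ w : ℂ} (hw : 1 < w.re) (h1 : 1 < (w + z₁).re)
    (h3 : 1 < (w + z₃).re) : LSeriesSummable (↗(FAF z₁ z₃)) w :=
  LSeriesSummable_mul (moebius_LSummable hw)
    (LSeriesSummable_mul (powAF_LSummable h1) (powAF_LSummable h3))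

lemma FAF_LSeries {z₁ z₃ w : ℂ} (hw : 1 < w.re) (h1 : 1 < (w + z₁).re)
    (h3 : 1 < (w + z₃).re) :
    LSeries (↗(FAF z₁ z₃)) w
      = riemannZeta (w + z₁) * riemannZeta (w + z₃) / riemannZeta w := by
  rw [FAF, LSeries_mul' (moebius_LSummable hw)
      (LSeriesSummable_mul (powAF_LSummable h1) (powAF_LSummable h3)),
    LSeries_mul' (powAF_LSummable h1) (powAF_LSummable h3),
    moebius_LSeries hw, powAF_LSeries h1, powAF_LSeries h3]
  ring

/- ### local Euler factors -/

lemma local_conv_eq {p : ℕ} (hp : p.Prime) (f g : ArithmeticFunction ℂ) (X : ℂ) (n : ℕ) :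
    (f * g) (p ^ n) * X ^ n =
      ∑ ij ∈ Finset.HasAntidiagonal.antidiagonal n, (f (p ^ ij.1) * X ^ ij.1) * (g (p ^ ij.2) * X ^ ij.2) := by
  rw [mul_apply, Nat.sum_divisorsAntidiagonal (f := fun a b => f a * g b),
    Nat.sum_divisors_prime_pow hp, Finset.Nat.sum_antidiagonal_eq_sum_range_succ_mk,
    Finset.sum_mul]
  refine Finset.sum_congr rfl fun i hi => ?_
  have hin : i ≤ n := Nat.lt_succ_iff.mp (Finset.mem_range.mp hi)
  rw [Nat.pow_div hin hp.pos]
  have : X ^ i * X ^ (n - i) = X ^ n := by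
    rw [← pow_add, Nat.add_sub_cancel' hin]
  rw [← this]
  ring

lemma local_summable_mul {p : ℕ} (hp : p.Prime) {f g : ArithmeticFunction ℂ} {X : ℂ}
    (hf : Summable fun j => ‖f (p ^ j) * X ^ j‖) (hg : Summable fun j => ‖g (p ^ j) * X ^ j‖) :
    Summable fun n => ‖(f * g) (p ^ n) * X ^ n‖ := by
  refine (summable_norm_sum_mul_antidiagonal_of_summable_norm hf hg).congr fun n => ?_
  rw [local_conv_eq hp]

lemma local_mul {p : ℕ} (hp : p.Prime) {f g : ArithmeticFunction ℂ} {X : ℂ}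
    (hf : Summable fun j => ‖f (p ^ j) * X ^ j‖) (hg : Summable fun j => ‖g (p ^ j) * X ^ j‖) :
    (∑' j, (f * g) (p ^ j) * X ^ j)
      = (∑' j, f (p ^ j) * X ^ j) * (∑' j, g (p ^ j) * X ^ j) := by
  rw [tsum_mul_tsum_eq_tsum_sum_antidiagonal_of_summable_norm hf hg]
  exact tsum_congr fun n => local_conv_eq hp f g X n

lemma norm_p_cpow_lt_one {p : ℕ} (hp : p.Prime) {u : ℂ} (hu : 0 < u.re) :
    ‖(p : ℂ) ^ (-u)‖ < 1 := by
  rw [Complex.norm_natCast_cpow_of_pos hp.pos]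
  exact Real.rpow_lt_one_of_one_lt_of_neg (by exact_mod_cast hp.one_lt)
    (by simpa using neg_neg_iff_pos.mpr hu)

lemma geom_tsum_ne_zero {r : ℂ} (hr : ‖r‖ < 1) : (∑' j : ℕ, r ^ j) ≠ 0 := by
  rw [tsum_geometric_of_norm_lt_one hr]
  refine inv_ne_zero fun h => ?_
  rw [sub_eq_zero] at h
  rw [← h] at hr
  simp at hr

lemma powAF_local {p : ℕ} (hp : p.Prime) (α : ℂ) (X : ℂ) (j : ℕ) :
    powAF α (p ^ j) * X ^ j = ((p : ℂ) ^ (-α) * X) ^ j := by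
  rw [powAF_apply (pow_ne_zero j hp.pos.ne'), castPowCpow, mul_pow]

lemma powAF_local_summable {p : ℕ} (hp : p.Prime) {α w : ℂ} (h : 0 < (w + α).re) :
    Summable fun j => ‖powAF α (p ^ j) * ((p : ℂ) ^ (-w)) ^ j‖ := by
  have hpc : (p : ℂ) ≠ 0 := Nat.cast_ne_zero.mpr hp.pos.ne'
  have key : (p : ℂ) ^ (-α) * (p : ℂ) ^ (-w) = (p : ℂ) ^ (-(w + α)) := by
    rw [← Complex.cpow_add _ _ hpc]; ring_nf
  have hn : ‖(p : ℂ) ^ (-α) * (p : ℂ) ^ (-w)‖ < 1 := by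
    rw [key]; exact norm_p_cpow_lt_one hp h
  have hs : Summable fun j : ℕ => ‖(p : ℂ) ^ (-α) * (p : ℂ) ^ (-w)‖ ^ j :=
    summable_geometric_of_lt_one (norm_nonneg _) hn
  refine Summable.congr hs fun j => ?_
  rw [powAF_local hp, norm_pow]

lemma powAF_local_tsum_ne_zero {p : ℕ} (hp : p.Prime) {α w : ℂ} (h : 0 < (w + α).re) :
    (∑' j : ℕ, powAF α (p ^ j) * ((p : ℂ) ^ (-w)) ^ j) ≠ 0 := by
  have hpc : (p : ℂ) ≠ 0 := Nat.cast_ne_zero.mpr hp.pos.ne'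
  have key : (p : ℂ) ^ (-α) * (p : ℂ) ^ (-w) = (p : ℂ) ^ (-(w + α)) := by
    rw [← Complex.cpow_add _ _ hpc]; ring_nf
  have hn : ‖(p : ℂ) ^ (-α) * (p : ℂ) ^ (-w)‖ < 1 := by
    rw [key]; exact norm_p_cpow_lt_one hp h
  rw [tsum_congr (powAF_local hp α ((p : ℂ) ^ (-w)))]
  exact geom_tsum_ne_zero hn

lemma moebius_local_eq {p : ℕ} (hp : p.Prime) (X : ℂ) (j : ℕ) (hj : j ∉ ({0, 1} : Finset ℕ)) :
    ((moebius : ArithmeticFunction ℤ) : ArithmeticFunction ℂ) (p ^ j) * X ^ j = 0 := by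
  simp only [Finset.mem_insert, Finset.mem_singleton, not_or] at hj
  rw [intCoe_apply, moebius_apply_prime_pow hp hj.1, if_neg hj.2]
  simp

lemma moebius_local_summable {p : ℕ} (hp : p.Prime) (X : ℂ) :
    Summable fun j =>
      ‖((moebius : ArithmeticFunction ℤ) : ArithmeticFunction ℂ) (p ^ j) * X ^ j‖ :=
  summable_of_ne_finset_zero (s := {0, 1}) fun j hj => by
    rw [moebius_local_eq hp X j hj, norm_zero]

lemma FAF_local_tsum_ne_zero {p : ℕ} (hp : p.Prime) {z₁ z₃ w : ℂ} (hw : 0 < w.re)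
    (h1 : 0 < (w + z₁).re) (h3 : 0 < (w + z₃).re) :
    (∑' j : ℕ, FAF z₁ z₃ (p ^ j) * ((p : ℂ) ^ (-w)) ^ j) ≠ 0 := by
  rw [FAF, local_mul hp (moebius_local_summable hp _)
      (local_summable_mul hp (powAF_local_summable hp h1) (powAF_local_summable hp h3)),
    local_mul hp (powAF_local_summable hp h1) (powAF_local_summable hp h3)]
  have hmoeb : (∑' j : ℕ,
      ((moebius : ArithmeticFunction ℤ) : ArithmeticFunction ℂ) (p ^ j)
        * ((p : ℂ) ^ (-w)) ^ j) = 1 - (p : ℂ) ^ (-w) := by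
    rw [tsum_eq_sum (s := {0, 1}) fun j hj => moebius_local_eq hp _ j hj,
      show ({0, 1} : Finset ℕ) = insert 0 {1} from rfl, Finset.sum_insert (by simp),
      Finset.sum_singleton]
    simp [intCoe_apply, moebius_apply_prime hp]
    ring
  rw [hmoeb]
  refine mul_ne_zero ?_ (mul_ne_zero (powAF_local_tsum_ne_zero hp h1)
    (powAF_local_tsum_ne_zero hp h3))
  have hlt := norm_p_cpow_lt_one hp hw
  intro h
  rw [sub_eq_zero] at h
  rw [← h] at hlt
  simp at hlt

/- ### summability of shifted series -/

lemma shift_summable {z₁ z₃ w : ℂ} (hF : LSeriesSummable (↗(FAF z₁ z₃)) w) {k : ℕ}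
    (hk : k ≠ 0) :
    Summable fun ℓ : ℕ => if ℓ = 0 then 0 else FAF z₁ z₃ (k * ℓ) * (ℓ : ℂ) ^ (-w) := by
  have h1 : Summable fun ℓ => term (↗(FAF z₁ z₃)) w (k * ℓ) :=
    hF.comp_injective (mul_right_injective₀ hk)
  have hkw : (k : ℂ) ^ w ≠ 0 := fun h =>
    (Nat.cast_ne_zero.mpr hk : (k:ℂ) ≠ 0) ((Complex.cpow_eq_zero_iff _ _).mp h).1
  refine (h1.mul_left ((k : ℂ) ^ w)).congr fun ℓ => ?_
  rcases eq_or_ne ℓ 0 with rfl | hℓ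
  · simp [term]
  have hℓw : (ℓ : ℂ) ^ w ≠ 0 := fun h =>
    (Nat.cast_ne_zero.mpr hℓ : (ℓ:ℂ) ≠ 0) ((Complex.cpow_eq_zero_iff _ _).mp h).1
  rw [term_of_ne_zero (Nat.mul_ne_zero hk hℓ), if_neg hℓ, castMulCpow, cpow_neg]
  field_simp

lemma local_shift_summable {z₁ z₃ w : ℂ} (hF : LSeriesSummable (↗(FAF z₁ z₃)) w) {p : ℕ}
    (hp : p.Prime) (a : ℕ) :
    Summable fun j : ℕ => FAF z₁ z₃ (p ^ (j + a)) * ((p : ℂ) ^ (-w)) ^ j := by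
  have hinj : Function.Injective fun j : ℕ => p ^ (j + a) :=
    fun x y h => by
      have := Nat.pow_right_injective hp.two_le h
      omega
  have h1 : Summable fun j => term (↗(FAF z₁ z₃)) w (p ^ (j + a)) := hF.comp_injective hinj
  have hY : ((p : ℂ) ^ w) ≠ 0 := fun h =>
    (Nat.cast_ne_zero.mpr hp.pos.ne' : (p:ℂ) ≠ 0) ((Complex.cpow_eq_zero_iff _ _).mp h).1
  refine (h1.mul_left (((p : ℂ) ^ w) ^ a)).congr fun j => ?_
  rw [term_of_ne_zero (pow_ne_zero _ hp.pos.ne'), castPowCpow, cpow_neg, inv_pow]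
  rw [pow_add]
  field_simp
  ring

/- ### the key splitting identity -/

noncomputable def Lsum (z₁ z₃ w : ℂ) (k : ℕ) : ℂ :=
  ∑' ℓ : ℕ, if ℓ = 0 then 0 else FAF z₁ z₃ (k * ℓ) * (ℓ : ℂ) ^ (-w)

noncomputable def Sloc (z₁ z₃ w : ℂ) (p a : ℕ) : ℂ :=
  ∑' j : ℕ, FAF z₁ z₃ (p ^ (j + a)) * ((p : ℂ) ^ (-w)) ^ j

lemma keyC {z₁ z₃ w : ℂ} (hF : LSeriesSummable (↗(FAF z₁ z₃)) w)
    {p : ℕ} (hp : p.Prime) {k' : ℕ} (hk' : k' ≠ 0) (hpk' : ¬ p ∣ k') (a : ℕ) :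
    (∑' ℓ : ℕ, if ℓ = 0 then 0 else FAF z₁ z₃ (p ^ a * k' * ℓ) * (ℓ : ℂ) ^ (-w))
      = (∑' j : ℕ, FAF z₁ z₃ (p ^ (j + a)) * ((p : ℂ) ^ (-w)) ^ j) *
        (∑' m : ℕ, if p ∣ m then 0 else FAF z₁ z₃ (k' * m) * (m : ℂ) ^ (-w)) := by
  set F := FAF z₁ z₃ with hFdef
  set X : ℂ := (p : ℂ) ^ (-w) with hX
  set A : ℕ → ℂ := fun j => F (p ^ (j + a)) * X ^ j with hA
  set B : ℕ → ℂ := fun m => if p ∣ m then 0 else F (k' * m) * (m : ℂ) ^ (-w) with hB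
  have hpc : (p : ℂ) ≠ 0 := Nat.cast_ne_zero.mpr hp.pos.ne'
  have hXne : X ≠ 0 := fun h => hpc ((Complex.cpow_eq_zero_iff _ _).mp h).1
  have hAs : Summable A := local_shift_summable hF hp a
  have hBs : Summable B := by
    refine ((shift_summable hF hk').indicator {m | ¬ p ∣ m}).congr fun m => ?_
    by_cases hm : p ∣ m
    · rw [Set.indicator_of_notMem (by simpa using hm), hB]
      simp [hm]
    · have hm0 : m ≠ 0 := fun h0 => hm (h0 ▸ dvd_zero p)
      rw [Set.indicator_of_mem (by simpa using hm), hB]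
      simp [hm, hm0, hFdef]
  have hcop : ∀ (j m : ℕ), ¬ p ∣ m → Nat.Coprime (p ^ (j + a)) (k' * m) := by
    intro j m hpm
    refine Nat.Coprime.pow_left _ ((Nat.Prime.coprime_iff_not_dvd hp).mpr ?_)
    rintro hd
    rcases (Nat.Prime.dvd_mul hp).mp hd with h | h
    exacts [hpk' h, hpm h]
  have hfact : ∀ (j m : ℕ), p ^ a * k' * (p ^ j * m) = p ^ (j + a) * (k' * m) := by
    intro j m; rw [pow_add]; ring
  have hbij : (∑' ℓ : ℕ, if ℓ = 0 then 0 else F (p ^ a * k' * ℓ) * (ℓ : ℂ) ^ (-w))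
      = ∑' jm : ℕ × ℕ, A jm.1 * B jm.2 := by
    refine tsum_eq_tsum_of_ne_zero_bij (fun x => p ^ x.1.1 * x.1.2) ?_ ?_ ?_
    · rintro ⟨⟨j₁, m₁⟩, hx₁⟩ ⟨⟨j₂, m₂⟩, hx₂⟩ h
      have hB₁ : B m₁ ≠ 0 := right_ne_zero_of_mul hx₁
      have hB₂ : B m₂ ≠ 0 := right_ne_zero_of_mul hx₂
      have hpm₁ : ¬ p ∣ m₁ := fun hd => hB₁ (by simp [hB, hd])
      have hpm₂ : ¬ p ∣ m₂ := fun hd => hB₂ (by simp [hB, hd])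
      have hm₁ : m₁ ≠ 0 := fun h0 => hpm₁ (h0 ▸ dvd_zero p)
      have hm₂ : m₂ ≠ 0 := fun h0 => hpm₂ (h0 ▸ dvd_zero p)
      have hkey : ∀ (j m : ℕ), ¬ p ∣ m → m ≠ 0 → (p ^ j * m).factorization p = j := by
        intro j m hpm hm
        rw [Nat.factorization_mul (pow_ne_zero _ hp.pos.ne') hm, Finsupp.add_apply,
          hp.factorization_pow, Finsupp.single_eq_same,
          Nat.factorization_eq_zero_of_not_dvd hpm, add_zero]
      have h' : (p ^ j₁ * m₁ : ℕ) = p ^ j₂ * m₂ := h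
      have hj : j₁ = j₂ := by
        rw [← hkey j₁ m₁ hpm₁ hm₁, ← hkey j₂ m₂ hpm₂ hm₂, h']
      subst hj
      have hm : m₁ = m₂ := Nat.eq_of_mul_eq_mul_left (pow_pos hp.pos j₁) h'
      simp [hm]
    · intro ℓ hℓ
      have hℓ0 : ℓ ≠ 0 := by
        rintro rfl
        simp [Function.mem_support] at hℓ
      set j : ℕ := ℓ.factorization p with hj
      set m : ℕ := ordCompl[p] ℓ with hm
      have hpm : ¬ p ∣ m := Nat.not_dvd_ordCompl hp hℓ0
      have hm0 : m ≠ 0 := (Nat.ordCompl_pos p hℓ0).ne'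
      have hsplit : p ^ j * m = ℓ := Nat.ordProj_mul_ordCompl_eq_self ℓ p
      have hFne : F (p ^ a * k' * ℓ) ≠ 0 := by
        intro h0
        apply hℓ
        simp only [Function.mem_support, if_neg hℓ0] at *
        rw [h0, zero_mul]
      have hmul : F (p ^ a * k' * ℓ) = F (p ^ (j + a)) * F (k' * m) := by
        rw [← hsplit, hfact]
        exact (FAF_mult z₁ z₃).map_mul_of_coprime (hcop j m hpm)
      rw [hmul] at hFne
      have hF1 : F (p ^ (j + a)) ≠ 0 := left_ne_zero_of_mul hFne
      have hF2 : F (k' * m) ≠ 0 := right_ne_zero_of_mul hFne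
      have hmem : (j, m) ∈ Function.support (fun jm : ℕ × ℕ => A jm.1 * B jm.2) := by
        simp only [Function.mem_support]
        refine mul_ne_zero (mul_ne_zero hF1 (pow_ne_zero _ hXne)) ?_
        rw [hB]
        simp only [if_neg hpm]
        refine mul_ne_zero hF2 fun h0 => ?_
        exact (Nat.cast_ne_zero.mpr hm0 : (m:ℂ) ≠ 0) ((Complex.cpow_eq_zero_iff _ _).mp h0).1
      exact ⟨⟨(j, m), hmem⟩, hsplit⟩
    · rintro ⟨⟨j, m⟩, hx⟩
      have hBm : B m ≠ 0 := right_ne_zero_of_mul hx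
      have hpm : ¬ p ∣ m := fun hd => hBm (by simp [hB, hd])
      have hm0 : m ≠ 0 := fun h0 => hpm (h0 ▸ dvd_zero p)
      have hne : p ^ j * m ≠ 0 := Nat.mul_ne_zero (pow_ne_zero _ hp.pos.ne') hm0
      simp only [if_neg hne]
      rw [hfact, (FAF_mult z₁ z₃).map_mul_of_coprime (hcop j m hpm), castMulCpow,
        castPowCpow]
      simp only [hA, hB, if_neg hpm]
      ring
  rw [hbij, ← tsum_mul_tsum_of_summable_norm (summable_norm_iff.mpr hAs)
    (summable_norm_iff.mpr hBs)]

lemma keyC' {z₁ z₃ w : ℂ} (hF : LSeriesSummable (↗(FAF z₁ z₃)) w)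
    {p : ℕ} (hp : p.Prime) {k' : ℕ} (hk' : k' ≠ 0) (hpk' : ¬ p ∣ k') (a : ℕ) :
    Lsum z₁ z₃ w (p ^ a * k') = Sloc z₁ z₃ w p a *
        (∑' m : ℕ, if p ∣ m then 0 else FAF z₁ z₃ (k' * m) * (m : ℂ) ^ (-w)) :=
  keyC hF hp hk' hpk' a

/- ### the inductive product identity -/

lemma prodE {z₁ z₃ w : ℂ} (hF : LSeriesSummable (↗(FAF z₁ z₃)) w) :
    ∀ k : ℕ, k ≠ 0 → Lsum z₁ z₃ w k * ∏ p ∈ k.primeFactors, Sloc z₁ z₃ w p 0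
      = Lsum z₁ z₃ w 1 * ∏ p ∈ k.primeFactors, Sloc z₁ z₃ w p (k.factorization p) := by
  intro k
  induction k using Nat.strong_induction_on with
  | _ k ih =>
    intro hk0
    rcases eq_or_ne k 1 with rfl | hk1
    · simp
    set p := k.minFac with hpdef
    have hp : p.Prime := Nat.minFac_prime hk1
    set a := k.factorization p with hadef
    set k' := ordCompl[p] k with hk'def
    have hk' : k' ≠ 0 := (Nat.ordCompl_pos p hk0).ne'
    have hpk' : ¬ p ∣ k' := Nat.not_dvd_ordCompl hp hk0
    have hfac : p ^ a * k' = k := Nat.ordProj_mul_ordCompl_eq_self k p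
    have ha0 : a ≠ 0 := (hp.factorization_pos_of_dvd hk0 k.minFac_dvd).ne'
    have hlt : k' < k := Nat.div_lt_self (Nat.pos_of_ne_zero hk0)
      (Nat.one_lt_pow ha0 hp.one_lt)
    have hpf : k.primeFactors = insert p k'.primeFactors := by
      rw [← hfac, Nat.primeFactors_mul (pow_ne_zero _ hp.pos.ne') hk',
        Nat.primeFactors_prime_pow ha0 hp, Finset.insert_eq]
    have hpnot : p ∉ k'.primeFactors := fun h => hpk' (Nat.dvd_of_mem_primeFactors h)
    have hfactq : ∀ q ∈ k'.primeFactors, k.factorization q = k'.factorization q := by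
      intro q hq
      have hqp : q ≠ p := fun h => hpnot (h ▸ hq)
      rw [← hfac, Nat.factorization_mul (pow_ne_zero _ hp.pos.ne') hk', Finsupp.add_apply,
        hp.factorization_pow, Finsupp.single_apply, if_neg (fun h => hqp h.symm), zero_add]
    set T : ℂ := ∑' m : ℕ, if p ∣ m then 0 else FAF z₁ z₃ (k' * m) * (m : ℂ) ^ (-w) with hT
    have hLk : Lsum z₁ z₃ w k = Sloc z₁ z₃ w p a * T := by
      rw [← hfac]; exact keyC' hF hp hk' hpk' a
    have hLk' : Lsum z₁ z₃ w k' = Sloc z₁ z₃ w p 0 * T := by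
      have := keyC' hF hp hk' hpk' 0
      rwa [pow_zero, one_mul] at this
    have hIH := ih k' hlt hk'
    rw [hpf, Finset.prod_insert hpnot, Finset.prod_insert hpnot]
    have hprodq : (∏ q ∈ k'.primeFactors, Sloc z₁ z₃ w q (k.factorization q))
        = ∏ q ∈ k'.primeFactors, Sloc z₁ z₃ w q (k'.factorization q) :=
      Finset.prod_congr rfl fun q hq => by rw [hfactq q hq]
    rw [hprodq, ← hadef]
    calc Lsum z₁ z₃ w k * (Sloc z₁ z₃ w p 0 * ∏ q ∈ k'.primeFactors, Sloc z₁ z₃ w q 0)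
        = Sloc z₁ z₃ w p a *
            (Lsum z₁ z₃ w k' * ∏ q ∈ k'.primeFactors, Sloc z₁ z₃ w q 0) := by
          rw [hLk, hLk']; ring
      _ = Sloc z₁ z₃ w p a * (Lsum z₁ z₃ w 1 *
            ∏ q ∈ k'.primeFactors, Sloc z₁ z₃ w q (k'.factorization q)) := by rw [hIH]
      _ = Lsum z₁ z₃ w 1 * (Sloc z₁ z₃ w p a *
            ∏ q ∈ k'.primeFactors, Sloc z₁ z₃ w q (k'.factorization q)) := by ring

end aux

/-- The Dirichlet series identity for `∑_ℓ f_{z₁,z₃}(kℓ) ℓ^{-(1+z₂+2s)}`. -/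
theorem fShift_dirichlet_series (k : ℕ) (hk : 0 < k) (z₁ z₂ z₃ s : ℂ)
    (h₂ : 0 < (z₂ + 2 * s).re) (h₁₂ : 0 < (z₁ + z₂ + 2 * s).re)
    (h₂₃ : 0 < (z₂ + z₃ + 2 * s).re) :
    (∑' ℓ : ℕ, if ℓ = 0 then 0 else
        fShift z₁ z₃ (k * ℓ) * (ℓ : ℂ) ^ (-(1 + z₂ + 2 * s))) =
      riemannZeta (1 + z₁ + z₂ + 2 * s) * riemannZeta (1 + z₂ + z₃ + 2 * s) /
          riemannZeta (1 + z₂ + 2 * s) *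
        ∏ p ∈ k.primeFactors,
          (∑' m : ℕ, fShift z₁ z₃ (p ^ (m + k.factorization p)) *
              (p : ℂ) ^ (-(m : ℂ) * (1 + z₂ + 2 * s))) /
            (∑' m : ℕ, fShift z₁ z₃ (p ^ m) * (p : ℂ) ^ (-(m : ℂ) * (1 + z₂ + 2 * s))) := by
  set w : ℂ := 1 + z₂ + 2 * s with hwdef
  have hw : 1 < w.re := by
    simp only [hwdef, Complex.add_re, Complex.one_re]
    simp only [Complex.add_re] at h₂
    linarith
  have h1 : 1 < (w + z₁).re := by
    simp only [hwdef, Complex.add_re, Complex.one_re]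
    simp only [Complex.add_re] at h₁₂
    linarith
  have h3 : 1 < (w + z₃).re := by
    simp only [hwdef, Complex.add_re, Complex.one_re]
    simp only [Complex.add_re] at h₂₃
    linarith
  have hF := FAF_LSummable hw h1 h3
  have hk0 : k ≠ 0 := hk.ne'
  have hLHS : (∑' ℓ : ℕ, if ℓ = 0 then 0 else
      fShift z₁ z₃ (k * ℓ) * (ℓ : ℂ) ^ (-w)) = Lsum z₁ z₃ w k := by
    refine tsum_congr fun ℓ => ?_
    rcases eq_or_ne ℓ 0 with rfl | hℓ
    · simp [Lsum]
    · simp only [if_neg hℓ, FAF_eq_fShift]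
  rw [hLHS]
  have hnum : ∀ p ∈ k.primeFactors,
      (∑' m : ℕ, fShift z₁ z₃ (p ^ (m + k.factorization p)) *
        (p : ℂ) ^ (-(m : ℂ) * w)) = Sloc z₁ z₃ w p (k.factorization p) := by
    intro p _
    refine tsum_congr fun m => ?_
    rw [FAF_eq_fShift, show -(m : ℂ) * w = (m : ℂ) * (-w) by ring, Complex.cpow_nat_mul]
  have hden : ∀ p ∈ k.primeFactors,
      (∑' m : ℕ, fShift z₁ z₃ (p ^ m) * (p : ℂ) ^ (-(m : ℂ) * w))
        = Sloc z₁ z₃ w p 0 := by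
    intro p _
    refine tsum_congr fun m => ?_
    rw [FAF_eq_fShift, show -(m : ℂ) * w = (m : ℂ) * (-w) by ring, Complex.cpow_nat_mul,
      add_zero]
  rw [Finset.prod_congr rfl fun p hp => by rw [hnum p hp, hden p hp]]
  have hS0ne : ∀ p ∈ k.primeFactors, Sloc z₁ z₃ w p 0 ≠ 0 := by
    intro p hp
    have hpp := Nat.prime_of_mem_primeFactors hp
    have : Sloc z₁ z₃ w p 0 = ∑' j : ℕ, FAF z₁ z₃ (p ^ j) * ((p : ℂ) ^ (-w)) ^ j :=
      tsum_congr fun j => by rw [add_zero]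
    rw [this]
    exact FAF_local_tsum_ne_zero hpp (by linarith) (by linarith) (by linarith)
  have hP0 : (∏ p ∈ k.primeFactors, Sloc z₁ z₃ w p 0) ≠ 0 :=
    Finset.prod_ne_zero_iff.mpr hS0ne
  have hL1 : Lsum z₁ z₃ w 1 = riemannZeta (1 + z₁ + z₂ + 2 * s) *
      riemannZeta (1 + z₂ + z₃ + 2 * s) / riemannZeta (1 + z₂ + 2 * s) := by
    have : Lsum z₁ z₃ w 1 = LSeries (↗(FAF z₁ z₃)) w := by
      refine tsum_congr fun ℓ => ?_
      rcases eq_or_ne ℓ 0 with rfl | hℓ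
      · simp [term]
      · rw [if_neg hℓ, term_of_ne_zero hℓ, one_mul, cpow_neg, div_eq_mul_inv]
    rw [this, FAF_LSeries hw h1 h3, hwdef,
      show (1 : ℂ) + z₂ + 2 * s + z₁ = 1 + z₁ + z₂ + 2 * s by ring,
      show (1 : ℂ) + z₂ + 2 * s + z₃ = 1 + z₂ + z₃ + 2 * s by ring]
  rw [← hL1, Finset.prod_div_distrib, ← mul_div_assoc, eq_div_iff hP0]
  exact prodE hF k hk0
end

section
/- Let ψ be a primitive Dirichlet character modulo q, and let k, d be positive integers with d | kq. Write k = k′ k_q where (k′, q) = 1 and every prime dividing k_q divides q. Then: (i) if d is not of the form d = k_q d′ with (d′, q) = 1, then δ(q, kq, d, ψ) = 0; and (ii) if d = k_q d′ with (d′, q) = 1, then δ(q, kq, d, ψ) = δ(q, k′q, d′, ψ). -/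
open Complex

/-- `δ(q, K, d, ψ) = ∑_{e ∣ d, e ∣ K/q} (μ(d/e)/φ(K/e)) ψ̄(-K/(eq)) ψ(d/e) μ(K/(eq))`. -/
noncomputable def deltaFactor (q K d : ℕ) (ψ : DirichletCharacter ℂ q) : ℂ :=
  ∑ e ∈ d.divisors.filter (fun e => e ∣ K / q),
    ((ArithmeticFunction.moebius (d / e) : ℂ) / (Nat.totient (K / e) : ℂ)) *
      (starRingEnd ℂ) (ψ (-((K / (e * q) : ℕ) : ZMod q))) *
      ψ ((d / e : ℕ) : ZMod q) * (ArithmeticFunction.moebius (K / (e * q)) : ℂ)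

/-- Reduction of `δ(q, kq, d, ψ)` for a primitive character `ψ` mod `q`: writing
`k = k′ k_q` with `(k′, q) = 1` and every prime of `k_q` dividing `q`, the factor
vanishes unless `d = k_q d′` with `(d′, q) = 1`, in which case it equals
`δ(q, k′q, d′, ψ)`. -/
theorem deltaFactor_reduction (q : ℕ) (hq : 0 < q) (ψ : DirichletCharacter ℂ q)
    (hψ : ψ.IsPrimitive) (k d k' kq : ℕ) (hk : 0 < k) (hd : d ∣ k * q)
    (hfac : k = k' * kq) (hcop : Nat.Coprime k' q)
    (hkq : ∀ p : ℕ, p.Prime → p ∣ kq → p ∣ q) :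
    ((¬ ∃ d' : ℕ, d = kq * d' ∧ Nat.Coprime d' q) → deltaFactor q (k * q) d ψ = 0) ∧
      (∀ d' : ℕ, d = kq * d' → Nat.Coprime d' q →
        deltaFactor q (k * q) d ψ = deltaFactor q (k' * q) d' ψ) := by
  haveI : NeZero q := ⟨hq.ne'⟩
  have hkq0 : 0 < kq := by
    rcases Nat.eq_zero_or_pos kq with h | h
    · subst h; simp at hfac; omega
    · exact h
  have hk'0 : 0 < k' := by
    rcases Nat.eq_zero_or_pos k' with h | h
    · subst h; simp at hfac; omega
    · exact h
  have hd0 : 0 < d := Nat.pos_of_dvd_of_pos hd (by positivity)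
  -- a generic term function
  set F : ℕ → ℕ → ℕ → ℂ := fun m D e =>
    ((ArithmeticFunction.moebius (D / e) : ℂ) / (Nat.totient (m * q / e) : ℂ)) *
      (starRingEnd ℂ) (ψ (-((m / e : ℕ) : ZMod q))) *
      ψ ((D / e : ℕ) : ZMod q) * (ArithmeticFunction.moebius (m / e) : ℂ) with hF
  have hdelta : ∀ (m D : ℕ), 0 < m → deltaFactor q (m * q) D ψ =
      ∑ e ∈ D.divisors.filter (fun e => e ∣ m), F m D e := by
    intro m D hm
    unfold deltaFactor
    simp only [hF, Nat.mul_div_cancel _ hq, Nat.mul_div_mul_right _ _ hq]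
  -- zero lemmas
  have hzero1 : ∀ (m D e : ℕ), ¬ (m / e).Coprime q → F m D e = 0 := by
    intro m D e h
    have h1 : ¬ IsUnit (((m / e : ℕ) : ZMod q)) := by
      rw [ZMod.isUnit_iff_coprime]; exact h
    have h2 : ψ (-((m / e : ℕ) : ZMod q)) = 0 :=
      ψ.map_nonunit (by rwa [IsUnit.neg_iff])
    simp [hF, h2]
  have hzero2 : ∀ (m D e : ℕ), ¬ (D / e).Coprime q → F m D e = 0 := by
    intro m D e h
    have h1 : ¬ IsUnit (((D / e : ℕ) : ZMod q)) := by
      rw [ZMod.isUnit_iff_coprime]; exact h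
    have h2 : ψ (((D / e : ℕ) : ZMod q)) = 0 := ψ.map_nonunit h1
    simp [hF, h2]
  -- kq is coprime to anything coprime to q
  have hcopkq : ∀ x : ℕ, x.Coprime q → kq.Coprime x := by
    intro x hx
    by_contra h
    obtain ⟨p, hp, hpd⟩ := Nat.exists_prime_and_dvd h
    have hpkq : p ∣ kq := hpd.trans (Nat.gcd_dvd_left _ _)
    have hpx : p ∣ x := hpd.trans (Nat.gcd_dvd_right _ _)
    have hpq : p ∣ q := hkq p hp hpkq
    have : p ∣ 1 := hx ▸ Nat.dvd_gcd hpx hpq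
    exact hp.ne_one (Nat.dvd_one.mp this)
  -- structural lemma: e ∣ k with k/e coprime to q implies e = kq * e' with e' ∣ k'
  have hstruct : ∀ e : ℕ, e ∣ k → (k / e).Coprime q → ∃ e', e = kq * e' ∧ e' ∣ k' := by
    intro e he h
    have hcop2 : kq.Coprime (k / e) := hcopkq _ h
    have hkqk : kq ∣ k := hfac ▸ dvd_mul_left kq k'
    have hkdvd : kq ∣ e := by
      apply hcop2.dvd_of_dvd_mul_right
      rw [Nat.mul_div_cancel' he]
      exact hkqk
    refine ⟨e / kq, (Nat.mul_div_cancel' hkdvd).symm, ?_⟩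
    have : kq * (e / kq) ∣ kq * k' := by
      rw [Nat.mul_div_cancel' hkdvd, mul_comm kq k', ← hfac]; exact he
    exact (Nat.mul_dvd_mul_iff_left hkq0).mp this
  constructor
  · -- part (i)
    intro hne
    rw [hdelta k d hk]
    apply Finset.sum_eq_zero
    intro e he
    simp only [Finset.mem_filter, Nat.mem_divisors] at he
    obtain ⟨⟨hed, -⟩, hek⟩ := he
    by_cases h1 : (k / e).Coprime q
    · by_cases h2 : (d / e).Coprime q
      · exfalso
        obtain ⟨e', he', he'k'⟩ := hstruct e hek h1
        refine hne ⟨e' * (d / e), ?_, ?_⟩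
        · rw [← mul_assoc, ← he', Nat.mul_div_cancel' hed]
        · exact (Nat.Coprime.coprime_dvd_left he'k' hcop).mul h2
      · exact hzero2 k d e h2
    · exact hzero1 k d e h1
  · -- part (ii)
    intro d' hdd' hd'q
    have hd'0 : 0 < d' := by
      rcases Nat.eq_zero_or_pos d' with h | h
      · subst h; simp at hdd'; omega
      · exact h
    rw [hdelta k d hk, hdelta k' d' hk'0]
    set S := d.divisors.filter (fun e => e ∣ k) with hS
    set S' := d'.divisors.filter (fun e => e ∣ k') with hS'
    have hsub : S'.image (fun e' => kq * e') ⊆ S := by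
      intro e he
      simp only [Finset.mem_image, hS', Finset.mem_filter, Nat.mem_divisors] at he
      obtain ⟨e', ⟨⟨he'd', -⟩, he'k'⟩, rfl⟩ := he
      simp only [hS, Finset.mem_filter, Nat.mem_divisors]
      exact ⟨⟨hdd' ▸ Nat.mul_dvd_mul_left kq he'd', hd0.ne'⟩,
        by rw [hfac, mul_comm k' kq]; exact Nat.mul_dvd_mul_left kq he'k'⟩
    have hvanish : ∀ e ∈ S, e ∉ S'.image (fun e' => kq * e') → F k d e = 0 := by
      intro e he hni
      simp only [hS, Finset.mem_filter, Nat.mem_divisors] at he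
      obtain ⟨⟨hed, -⟩, hek⟩ := he
      by_cases h1 : (k / e).Coprime q
      · exfalso
        obtain ⟨e', he', he'k'⟩ := hstruct e hek h1
        apply hni
        simp only [Finset.mem_image, hS', Finset.mem_filter, Nat.mem_divisors]
        refine ⟨e', ⟨⟨?_, hd'0.ne'⟩, he'k'⟩, he'.symm⟩
        have : kq * e' ∣ kq * d' := by rw [← he', ← hdd']; exact hed
        exact (Nat.mul_dvd_mul_iff_left hkq0).mp this
      · exact hzero1 k d e h1
    rw [← Finset.sum_subset hsub hvanish,
      Finset.sum_image (fun x _ y _ h => Nat.eq_of_mul_eq_mul_left hkq0 h)]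
    apply Finset.sum_congr rfl
    intro e' he'
    have e1 : d / (kq * e') = d' / e' := by rw [hdd', Nat.mul_div_mul_left _ _ hkq0]
    have e2 : k * q / (kq * e') = k' * q / e' := by
      rw [hfac, show k' * kq * q = kq * (k' * q) by ring, Nat.mul_div_mul_left _ _ hkq0]
    have e3 : k / (kq * e') = k' / e' := by
      rw [hfac, mul_comm k' kq, Nat.mul_div_mul_left _ _ hkq0]
    simp only [hF, e1, e2, e3]
end
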